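/- arXiv:2309.01459 — 2 statements merged into one kernel-verified Lean document; each statement's English description precedes it below -/
import Mathlib

section
/- The entropy density of f₆, namely ρs = −k_b ∫∫ f₆ ln(f₆/I^{δ/2−1}) dC dI, equals (up to an additive function of constants m, δ, k_b independent of ρ, θ_tr, θ_in) k_b·ρ/m·[ (3/2)ln θ_tr + (δ/2)ln θ_in − ln ρ ]. -/
open MeasureTheory
open Set Real

lemma int_gamma {a r : ℝ} (ha : 0 < a) (hr : 0 < r) :
    IntegrableOn (fun t : ℝ => t ^ (a - 1) * Real.exp (-(r * t))) (Set.Ioi 0) := by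
  have h0 : IntegrableOn (fun x : ℝ => Real.exp (-x) * x ^ (a - 1)) (Set.Ioi 0) :=
    Real.GammaIntegral_convergent ha
  have h1 : IntegrableOn (fun x : ℝ => Real.exp (-(r * x)) * (r * x) ^ (a - 1)) (Set.Ioi 0) := by
    have := (integrableOn_Ioi_comp_mul_left_iff
      (fun x : ℝ => Real.exp (-x) * x ^ (a - 1)) 0 hr).2 (by simpa using h0)
    simpa using this
  refine IntegrableOn.congr_fun (h1.const_mul (r ^ (1 - a))) (fun t ht => ?_) measurableSet_Ioi
  have ht' : (0:ℝ) < t := ht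
  rw [Real.mul_rpow hr.le ht'.le, ← mul_assoc, mul_comm (r ^ (1-a)) (Real.exp (-(r*t))),
    mul_assoc, ← mul_assoc (r ^ (1-a)), ← Real.rpow_add hr]
  norm_num
  ring

lemma inner_integral {A q θ δ : ℝ} (hA : 0 < A) (hθ : 0 < θ) (hδ : 0 < δ) :
    (∫ I in Set.Ioi (0:ℝ), (A * Real.exp (-q) * I ^ (δ/2 - 1) * Real.exp (-I/θ)) *
        Real.log ((A * Real.exp (-q) * I ^ (δ/2 - 1) * Real.exp (-I/θ)) / I ^ (δ/2 - 1)))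
      = A * Real.Gamma (δ/2) * θ ^ (δ/2) * Real.exp (-q) * (Real.log A - q - δ/2) := by
  have hp : (0:ℝ) < δ/2 := by linarith
  have hr : (0:ℝ) < θ⁻¹ := inv_pos.2 hθ
  have hint1 : IntegrableOn (fun I : ℝ => I ^ (δ/2 - 1) * Real.exp (-(θ⁻¹ * I)))
      (Set.Ioi 0) := int_gamma hp hr
  have hint2 : IntegrableOn (fun I : ℝ => I ^ (δ/2 + 1 - 1) * Real.exp (-(θ⁻¹ * I)))
      (Set.Ioi 0) := int_gamma (by linarith) hr
  have hstep : ∀ I ∈ Set.Ioi (0:ℝ),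
      (A * Real.exp (-q) * I ^ (δ/2 - 1) * Real.exp (-I/θ)) *
        Real.log ((A * Real.exp (-q) * I ^ (δ/2 - 1) * Real.exp (-I/θ)) / I ^ (δ/2 - 1))
      = (A * Real.exp (-q)) * ((Real.log A - q) * (I ^ (δ/2 - 1) * Real.exp (-(θ⁻¹ * I)))
          - θ⁻¹ * (I ^ (δ/2 + 1 - 1) * Real.exp (-(θ⁻¹ * I)))) := by
    intro I hI
    have hI' : (0:ℝ) < I := hI
    have hIp : (0:ℝ) < I ^ (δ/2 - 1) := Real.rpow_pos_of_pos hI' _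
    have hquot : (A * Real.exp (-q) * I ^ (δ/2 - 1) * Real.exp (-I/θ)) / I ^ (δ/2 - 1)
        = A * (Real.exp (-q) * Real.exp (-I/θ)) := by
      field_simp [hIp.ne']
    rw [hquot, Real.log_mul hA.ne' (by positivity), Real.log_mul (Real.exp_pos _).ne'
      (Real.exp_pos _).ne', Real.log_exp, Real.log_exp]
    have hX : Real.exp (-I/θ) = Real.exp (-(θ⁻¹ * I)) := by congr 1; field_simp
    have hIpow : I ^ (δ/2 + 1 - 1) = I ^ (δ/2 - 1) * I := by
      rw [show δ/2 + 1 - 1 = (δ/2 - 1) + 1 by ring, Real.rpow_add hI', Real.rpow_one]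
    rw [hX, hIpow]
    field_simp
    ring
  rw [setIntegral_congr_fun measurableSet_Ioi hstep, integral_const_mul, integral_sub
    (hint1.const_mul _) (hint2.const_mul _), integral_const_mul, integral_const_mul,
    integral_rpow_mul_exp_neg_mul_Ioi hp hr,
    integral_rpow_mul_exp_neg_mul_Ioi (by linarith : (0:ℝ) < δ/2 + 1) hr]
  rw [one_div, inv_inv, show δ/2 + 1 = δ/2 + 1 by rfl, Real.Gamma_add_one hp.ne',
    Real.rpow_add hθ, Real.rpow_one]
  field_simp

lemma norm_sq_e3 (x : Fin 3 → ℝ) :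
    ‖(MeasurableEquiv.toLp 2 (Fin 3 → ℝ)).symm.symm x‖ ^ 2 = ∑ i, x i ^ 2 := by
  simp only [MeasurableEquiv.symm_symm, MeasurableEquiv.coe_toLp,
    EuclideanSpace.norm_eq, PiLp.toLp_apply, Real.norm_eq_abs, sq_abs]
  rw [sq_sqrt]
  exact Finset.sum_nonneg fun i _ => sq_nonneg _

lemma integrable_transfer {F : ℝ → ℝ}
    (h : Integrable (fun x : Fin 3 → ℝ => F (∑ i, x i ^ 2))) :
    Integrable (fun v : EuclideanSpace ℝ (Fin 3) => F (‖v‖ ^ 2)) := by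
  rw [← MeasurePreserving.integrable_comp_emb
    (EuclideanSpace.volume_preserving_symm_measurableEquiv_toLp (Fin 3)).symm
    (MeasurableEquiv.measurableEmbedding _)]
  simpa only [Function.comp_def, norm_sq_e3] using h

lemma integral_transfer (F : ℝ → ℝ) :
    ∫ v : EuclideanSpace ℝ (Fin 3), F (‖v‖ ^ 2) = ∫ x : Fin 3 → ℝ, F (∑ i, x i ^ 2) := by
  have h := (EuclideanSpace.volume_preserving_symm_measurableEquiv_toLp (Fin 3)).symm
  rw [← h.integral_comp (MeasurableEquiv.measurableEmbedding _)]
  simp only [Function.comp_def, norm_sq_e3]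

lemma exp_sum_eq {b : ℝ} (x : Fin 3 → ℝ) :
    Real.exp (-b * ∑ i, x i ^ 2) = ∏ i, Real.exp (-b * x i ^ 2) := by
  rw [← Real.exp_sum]
  congr 1
  rw [Finset.mul_sum]

lemma sq_mul_exp_sum_eq {b : ℝ} (x : Fin 3 → ℝ) :
    (∑ i, x i ^ 2) * Real.exp (-b * ∑ i, x i ^ 2)
      = ∑ i, ∏ j, ((if j = i then (x j) ^ 2 else 1) * Real.exp (-b * x j ^ 2)) := by
  rw [Finset.sum_mul]
  congr 1 with i
  rw [Finset.prod_mul_distrib, ← exp_sum_eq]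
  congr 1
  rw [Finset.prod_ite_eq' Finset.univ i fun j => (x j) ^ 2, if_pos (Finset.mem_univ i)]

lemma integrable_sq_exp_1d {b : ℝ} (hb : 0 < b) :
    Integrable (fun y : ℝ => y ^ 2 * Real.exp (-b * y ^ 2)) := by
  have h := integrable_rpow_mul_exp_neg_mul_sq hb (by norm_num : (-1:ℝ) < 2)
  have e : (fun y : ℝ => y ^ (2:ℝ) * Real.exp (-b * y ^ 2))
      = fun y : ℝ => y ^ 2 * Real.exp (-b * y ^ 2) := funext fun y => by
    rw [show (2:ℝ) = ((2:ℕ):ℝ) by norm_num, Real.rpow_natCast]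
  rw [e] at h
  exact h

lemma int_gauss_norm {b : ℝ} (hb : 0 < b) :
    Integrable (fun v : EuclideanSpace ℝ (Fin 3) => Real.exp (-b * ‖v‖ ^ 2)) := by
  refine integrable_transfer (F := fun t => Real.exp (-b * t)) ?_
  have : (fun x : Fin 3 → ℝ => Real.exp (-b * ∑ i, x i ^ 2))
      = fun x : Fin 3 → ℝ => ∏ i, Real.exp (-b * x i ^ 2) := funext fun x => exp_sum_eq x
  rw [this]
  exact Integrable.fintype_prod fun i => integrable_exp_neg_mul_sq hb

lemma int_gauss_norm_sq {b : ℝ} (hb : 0 < b) :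
    Integrable (fun v : EuclideanSpace ℝ (Fin 3) => ‖v‖ ^ 2 * Real.exp (-b * ‖v‖ ^ 2)) := by
  refine integrable_transfer (F := fun t => t * Real.exp (-b * t)) ?_
  have : (fun x : Fin 3 → ℝ => (∑ i, x i ^ 2) * Real.exp (-b * ∑ i, x i ^ 2))
      = fun x : Fin 3 → ℝ => ∑ i, ∏ j, ((if j = i then (x j) ^ 2 else 1) *
          Real.exp (-b * x j ^ 2)) := funext fun x => sq_mul_exp_sum_eq x
  rw [this]
  refine integrable_finset_sum _ fun i _ => Integrable.fintype_prod
    (f := fun j y => (if j = i then y ^ 2 else 1) * Real.exp (-b * y ^ 2)) fun j => ?_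
  by_cases h : j = i
  · simpa [h] using integrable_sq_exp_1d hb
  · simpa [h] using integrable_exp_neg_mul_sq hb

lemma moment1d {b : ℝ} (hb : 0 < b) :
    ∫ y : ℝ, y ^ 2 * Real.exp (-b * y ^ 2) = b ^ (-(3:ℝ)/2) * Real.Gamma (3/2) := by
  have h : (fun y : ℝ => y ^ 2 * Real.exp (-b * y ^ 2))
      = fun y : ℝ => |y| ^ 2 * Real.exp (-b * |y| ^ 2) := by
    funext y; rw [sq_abs]
  rw [h, integral_comp_abs (f := fun t => t ^ 2 * Real.exp (-b * t ^ 2))]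
  have h2 : ∀ t ∈ Set.Ioi (0:ℝ), t ^ 2 * Real.exp (-b * t ^ 2)
      = t ^ (2:ℝ) * Real.exp (-b * t ^ (2:ℝ)) := by
    intro t ht
    have : ((2:ℕ):ℝ) = (2:ℝ) := by norm_num
    rw [← this, Real.rpow_natCast]
  rw [setIntegral_congr_fun measurableSet_Ioi h2,
    integral_rpow_mul_exp_neg_mul_rpow (by norm_num) (by norm_num) hb]
  norm_num
  ring

lemma val_gauss {b : ℝ} (hb : 0 < b) :
    ∫ v : EuclideanSpace ℝ (Fin 3), Real.exp (-b * ‖v‖ ^ 2) = (π / b) ^ ((3:ℝ)/2) := by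
  rw [GaussianFourier.integral_rexp_neg_mul_sq_norm hb]
  norm_num [finrank_euclideanSpace_fin]

lemma val_gauss_sq {b : ℝ} (hb : 0 < b) :
    ∫ v : EuclideanSpace ℝ (Fin 3), ‖v‖ ^ 2 * Real.exp (-b * ‖v‖ ^ 2)
      = 3 * (b ^ (-(3:ℝ)/2) * Real.Gamma (3/2)) * (π / b) := by
  rw [integral_transfer (fun t => t * Real.exp (-b * t))]
  have e : (fun x : Fin 3 → ℝ => (∑ i, x i ^ 2) * Real.exp (-b * ∑ i, x i ^ 2))
      = fun x : Fin 3 → ℝ => ∑ i, ∏ j, ((if j = i then (x j) ^ 2 else 1) *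
          Real.exp (-b * x j ^ 2)) := funext fun x => sq_mul_exp_sum_eq x
  rw [e, integral_finset_sum (μ := volume) _ (fun i _ => Integrable.fintype_prod
    (f := fun j y => (if j = i then y ^ 2 else 1) * Real.exp (-b * y ^ 2)) fun j => by
      by_cases h : j = i
      · simpa [h] using integrable_sq_exp_1d hb
      · simpa [h] using integrable_exp_neg_mul_sq hb)]
  have hval : ∀ i : Fin 3, (∫ x : Fin 3 → ℝ, ∏ j,
      ((if j = i then (x j) ^ 2 else 1) * Real.exp (-b * x j ^ 2)))
      = (b ^ (-(3:ℝ)/2) * Real.Gamma (3/2)) * Real.sqrt (π / b) ^ 2 := by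
    intro i
    rw [MeasureTheory.volume_pi, integral_fintype_prod_eq_prod
      (f := fun j y => (if j = i then y ^ 2 else 1) * Real.exp (-b * y ^ 2))]
    have h1 : ∀ j : Fin 3, (∫ y : ℝ, (if j = i then y ^ 2 else 1) * Real.exp (-b * y ^ 2))
        = if j = i then b ^ (-(3:ℝ)/2) * Real.Gamma (3/2) else Real.sqrt (π / b) := by
      intro j
      by_cases h : j = i
      · simp only [h, if_pos rfl]
        exact moment1d hb
      · simp only [if_neg h, one_mul]
        exact integral_gaussian b
    simp only [h1]
    fin_cases i <;> simp [Fin.prod_univ_three] <;> ring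
  simp only [hval, Fin.sum_univ_three]
  rw [Real.sq_sqrt (by positivity : (0:ℝ) ≤ π / b)]
  ring

lemma outer_integral {b : ℝ} (hb : 0 < b) (L : ℝ) :
    ∫ v : EuclideanSpace ℝ (Fin 3), Real.exp (-(b * ‖v‖ ^ 2)) * (L - b * ‖v‖ ^ 2)
      = (π / b) ^ ((3:ℝ)/2) * (L - 3/2) := by
  have hstep : (fun v : EuclideanSpace ℝ (Fin 3) =>
      Real.exp (-(b * ‖v‖ ^ 2)) * (L - b * ‖v‖ ^ 2))
      = fun v : EuclideanSpace ℝ (Fin 3) =>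
        L * Real.exp (-b * ‖v‖ ^ 2) - b * (‖v‖ ^ 2 * Real.exp (-b * ‖v‖ ^ 2)) := by
    funext v
    rw [neg_mul]
    ring
  rw [hstep, integral_sub ((int_gauss_norm hb).const_mul L) ((int_gauss_norm_sq hb).const_mul b),
    integral_const_mul, integral_const_mul, val_gauss hb, val_gauss_sq hb]
  have hG : Real.Gamma (3/2) = Real.sqrt π / 2 := by
    rw [show (3/2:ℝ) = 1/2 + 1 by norm_num, Real.Gamma_add_one (by norm_num),
      Real.Gamma_one_half_eq]
    ring
  have hpb : (π / b) ^ ((3:ℝ)/2) = π ^ ((3:ℝ)/2) / b ^ ((3:ℝ)/2) :=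
    Real.div_rpow Real.pi_pos.le hb.le _
  have hpi : π ^ ((3:ℝ)/2) = π * Real.sqrt π := by
    rw [show (3/2:ℝ) = 1 + 1/2 by norm_num, Real.rpow_add Real.pi_pos, Real.rpow_one,
      ← Real.sqrt_eq_rpow]
  have hbneg : b ^ (-(3:ℝ)/2) = (b ^ ((3:ℝ)/2))⁻¹ := by
    rw [show -(3:ℝ)/2 = -((3:ℝ)/2) by ring, Real.rpow_neg hb.le]
  have hbpos : (0:ℝ) < b ^ ((3:ℝ)/2) := Real.rpow_pos_of_pos hb _
  rw [hG, hpb, hpi, hbneg]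
  field_simp

theorem f6_entropy_density (m δ kb : ℝ) (hm : 0 < m) (hδ : 0 < δ) (hkb : 0 < kb) :
    ∃ c : ℝ, ∀ ρ θtr θin : ℝ, 0 < ρ → 0 < θtr → 0 < θin →
      (-kb * ∫ C : EuclideanSpace ℝ (Fin 3), ∫ I in Set.Ioi (0 : ℝ),
          (ρ / m * (2 * Real.pi * θtr) ^ (-(3 : ℝ) / 2) * Real.exp (-‖C‖ ^ 2 / (2 * θtr)) *
            (1 / Real.Gamma (δ / 2)) * I ^ (δ / 2 - 1) * θin ^ (-(δ / 2)) * Real.exp (-I / θin)) *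
          Real.log ((ρ / m * (2 * Real.pi * θtr) ^ (-(3 : ℝ) / 2) *
            Real.exp (-‖C‖ ^ 2 / (2 * θtr)) * (1 / Real.Gamma (δ / 2)) * I ^ (δ / 2 - 1) *
            θin ^ (-(δ / 2)) * Real.exp (-I / θin)) / I ^ (δ / 2 - 1)))
      = kb * ρ / m *
          (3 / 2 * Real.log θtr + δ / 2 * Real.log θin - Real.log ρ + c) := by
  refine ⟨Real.log m + 3/2 * Real.log (2*Real.pi) + Real.log (Real.Gamma (δ/2)) + δ/2 + 3/2, ?_⟩
  intro ρ θtr θin hρ hθtr hθin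
  have hπ := Real.pi_pos
  have hΓ : 0 < Real.Gamma (δ/2) := Real.Gamma_pos_of_pos (by linarith)
  have hA : (0:ℝ) < ρ/m * (2*Real.pi*θtr) ^ (-(3:ℝ)/2) * (1/Real.Gamma (δ/2)) *
      θin ^ (-(δ/2)) := by positivity
  set A : ℝ := ρ/m * (2*Real.pi*θtr) ^ (-(3:ℝ)/2) * (1/Real.Gamma (δ/2)) * θin ^ (-(δ/2))
    with hA_def
  have hb : (0:ℝ) < (2*θtr)⁻¹ := by positivity
  set b : ℝ := (2*θtr)⁻¹ with hb_def
  have hinner : ∀ C : EuclideanSpace ℝ (Fin 3),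
      (∫ I in Set.Ioi (0:ℝ),
        (ρ / m * (2 * Real.pi * θtr) ^ (-(3 : ℝ) / 2) * Real.exp (-‖C‖ ^ 2 / (2 * θtr)) *
          (1 / Real.Gamma (δ / 2)) * I ^ (δ / 2 - 1) * θin ^ (-(δ / 2)) * Real.exp (-I / θin)) *
        Real.log ((ρ / m * (2 * Real.pi * θtr) ^ (-(3 : ℝ) / 2) *
          Real.exp (-‖C‖ ^ 2 / (2 * θtr)) * (1 / Real.Gamma (δ / 2)) * I ^ (δ / 2 - 1) *
          θin ^ (-(δ / 2)) * Real.exp (-I / θin)) / I ^ (δ / 2 - 1)))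
      = (A * Real.Gamma (δ/2) * θin ^ (δ/2)) *
          (Real.exp (-(b * ‖C‖ ^ 2)) * ((Real.log A - δ/2) - b * ‖C‖ ^ 2)) := by
    intro C
    have harg : -‖C‖ ^ 2 / (2*θtr) = -(b * ‖C‖ ^ 2) := by
      rw [hb_def]; field_simp
    have h1 : ∀ I : ℝ,
        (ρ / m * (2 * Real.pi * θtr) ^ (-(3 : ℝ) / 2) * Real.exp (-‖C‖ ^ 2 / (2 * θtr)) *
          (1 / Real.Gamma (δ / 2)) * I ^ (δ / 2 - 1) * θin ^ (-(δ / 2)) * Real.exp (-I / θin)) *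
        Real.log ((ρ / m * (2 * Real.pi * θtr) ^ (-(3 : ℝ) / 2) *
          Real.exp (-‖C‖ ^ 2 / (2 * θtr)) * (1 / Real.Gamma (δ / 2)) * I ^ (δ / 2 - 1) *
          θin ^ (-(δ / 2)) * Real.exp (-I / θin)) / I ^ (δ / 2 - 1))
        = (A * Real.exp (-(b * ‖C‖ ^ 2)) * I ^ (δ/2 - 1) * Real.exp (-I/θin)) *
          Real.log ((A * Real.exp (-(b * ‖C‖ ^ 2)) * I ^ (δ/2 - 1) * Real.exp (-I/θin)) /
            I ^ (δ/2 - 1)) := by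
      intro I
      rw [harg]
      have hnum : ρ / m * (2 * Real.pi * θtr) ^ (-(3 : ℝ) / 2) * Real.exp (-(b * ‖C‖ ^ 2)) *
          (1 / Real.Gamma (δ / 2)) * I ^ (δ / 2 - 1) * θin ^ (-(δ / 2)) * Real.exp (-I / θin)
          = A * Real.exp (-(b * ‖C‖ ^ 2)) * I ^ (δ/2 - 1) * Real.exp (-I/θin) := by
        rw [hA_def]; ring
      rw [hnum]
    simp only [h1]
    rw [inner_integral hA hθin hδ]
    ring
  simp only [hinner]
  rw [integral_const_mul, outer_integral hb (Real.log A - δ/2)]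
  have hfrac : Real.pi / b = 2 * Real.pi * θtr := by
    rw [hb_def]; field_simp
  have h2 : (2*Real.pi*θtr:ℝ) ^ (-(3:ℝ)/2) * (2*Real.pi*θtr) ^ ((3:ℝ)/2) = 1 := by
    rw [← Real.rpow_add (by positivity)]; norm_num
  have h3 : θin ^ (-(δ/2)) * θin ^ (δ/2) = 1 := by
    rw [← Real.rpow_add hθin]; norm_num
  have hK : A * Real.Gamma (δ/2) * θin ^ (δ/2) * (Real.pi / b) ^ ((3:ℝ)/2) = ρ/m := by
    rw [hfrac, hA_def]
    calc ρ / m * (2*Real.pi*θtr) ^ (-(3:ℝ)/2) * (1/Real.Gamma (δ/2)) * θin ^ (-(δ/2)) *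
          Real.Gamma (δ/2) * θin ^ (δ/2) * (2*Real.pi*θtr) ^ ((3:ℝ)/2)
        = ρ / m * ((2*Real.pi*θtr) ^ (-(3:ℝ)/2) * (2*Real.pi*θtr) ^ ((3:ℝ)/2)) *
            ((1/Real.Gamma (δ/2)) * Real.Gamma (δ/2)) * (θin ^ (-(δ/2)) * θin ^ (δ/2)) := by
          ring
      _ = ρ / m := by
          rw [h2, h3, one_div, inv_mul_cancel₀ hΓ.ne']; ring
  have hlogA : Real.log A = Real.log ρ - Real.log m +
      (-(3:ℝ)/2) * (Real.log (2*Real.pi) + Real.log θtr) - Real.log (Real.Gamma (δ/2)) +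
      (-(δ/2)) * Real.log θin := by
    rw [hA_def, Real.log_mul (by positivity) (Real.rpow_pos_of_pos hθin _).ne',
      Real.log_mul (by positivity) (one_div_pos.2 hΓ).ne',
      Real.log_mul (div_pos hρ hm).ne' (Real.rpow_pos_of_pos (by positivity) _).ne',
      Real.log_div hρ.ne' hm.ne', Real.log_rpow (by positivity), Real.log_rpow hθin,
      one_div, Real.log_inv, Real.log_mul (by positivity) hθtr.ne']
    ring
  rw [show A * Real.Gamma (δ/2) * θin ^ (δ/2) *
      ((Real.pi / b) ^ ((3:ℝ)/2) * (Real.log A - δ/2 - 3/2))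
      = (A * Real.Gamma (δ/2) * θin ^ (δ/2) * (Real.pi / b) ^ ((3:ℝ)/2)) *
        (Real.log A - δ/2 - 3/2) from by ring, hK, hlogA]
  field_simp
  ring
end

section
/- For δ > 0 and accommodation coefficient χ ∈ [0, 2), the Onsager matrix with entries η11 = c(4+δ)/2, η12 = c/2, η22 = c[((15+4δ)/(2δ))·((3+δ)/(5+δ)) + 1/(3+δ)], where c = (χ/(2−χ))·p·√(2/(πθ)) with p, θ > 0, is symmetric positive semidefinite. -/
theorem onsager_matrix_psd (δ χ p θ : ℝ) (hδ : 0 < δ) (hχ0 : 0 ≤ χ) (hχ2 : χ < 2)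
    (hp : 0 < p) (hθ : 0 < θ) :
    (!![χ / (2 - χ) * p * Real.sqrt (2 / (Real.pi * θ)) * ((4 + δ) / 2),
        χ / (2 - χ) * p * Real.sqrt (2 / (Real.pi * θ)) * (1 / 2);
        χ / (2 - χ) * p * Real.sqrt (2 / (Real.pi * θ)) * (1 / 2),
        χ / (2 - χ) * p * Real.sqrt (2 / (Real.pi * θ)) *
          ((15 + 4 * δ) / (2 * δ) * ((3 + δ) / (5 + δ)) + 1 / (3 + δ))] :
      Matrix (Fin 2) (Fin 2) ℝ).PosSemidef := by
  set c := χ / (2 - χ) * p * Real.sqrt (2 / (Real.pi * θ)) with hc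
  have h2χ : 0 < 2 - χ := by linarith
  have hc0 : 0 ≤ c := by
    apply mul_nonneg (mul_nonneg (div_nonneg hχ0 h2χ.le) hp.le) (Real.sqrt_nonneg _)
  have h3 : (0:ℝ) < 3 + δ := by linarith
  have h5 : (0:ℝ) < 5 + δ := by linarith
  have he22 : (1:ℝ)/2 ≤ (15 + 4 * δ) / (2 * δ) * ((3 + δ) / (5 + δ)) + 1 / (3 + δ) := by
    have h1 : (1:ℝ)/2 ≤ (15 + 4 * δ) / (2 * δ) * ((3 + δ) / (5 + δ)) := by
      rw [div_mul_div_comm, le_div_iff₀ (by positivity)]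
      nlinarith
    have h2 : (0:ℝ) ≤ 1 / (3 + δ) := by positivity
    linarith
  constructor
  · rw [Matrix.IsHermitian]
    ext i j
    fin_cases i <;> fin_cases j <;> simp [Matrix.conjTranspose_apply]
  · intro x
    simp [dotProduct, Matrix.mulVec, Fin.sum_univ_two, Finsupp.sum_fintype]
    have key : 0 ≤ (4 + δ) / 2 * (x 0)^2 + x 0 * x 1 +
        ((15 + 4 * δ) / (2 * δ) * ((3 + δ) / (5 + δ)) + 1 / (3 + δ)) * (x 1)^2 := by
      have h1 : 2 * (x 0)^2 ≤ (4 + δ) / 2 * (x 0)^2 := by nlinarith [sq_nonneg (x 0)]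
      have h2 : (1:ℝ)/2 * (x 1)^2 ≤
          ((15 + 4 * δ) / (2 * δ) * ((3 + δ) / (5 + δ)) + 1 / (3 + δ)) * (x 1)^2 := by
        nlinarith [sq_nonneg (x 1)]
      nlinarith [sq_nonneg (2 * x 0 + x 1), sq_nonneg (x 0), sq_nonneg (x 1)]
    have h := mul_nonneg hc0 key
    have heq : x 0 * (c * ((4 + δ) / 2) * x 0 + c * 2⁻¹ * x 1) +
        x 1 * (c * 2⁻¹ * x 0 +
          c * ((15 + 4 * δ) / (2 * δ) * ((3 + δ) / (5 + δ)) + (3 + δ)⁻¹) * x 1)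
        = c * ((4 + δ) / 2 * x 0 ^ 2 + x 0 * x 1 +
          ((15 + 4 * δ) / (2 * δ) * ((3 + δ) / (5 + δ)) + 1 / (3 + δ)) * x 1 ^ 2) := by ring
    rw [show x 0 * (c * ((4 + δ) / 2)) * x 0 + x 0 * (c * 2⁻¹) * x 1 +
        (x 1 * (c * 2⁻¹) * x 0 + x 1 * (c * ((15 + 4 * δ) / (2 * δ) * ((3 + δ) / (5 + δ)) + (3 + δ)⁻¹)) * x 1) =
        x 0 * (c * ((4 + δ) / 2) * x 0 + c * 2⁻¹ * x 1) +
        x 1 * (c * 2⁻¹ * x 0 + c * ((15 + 4 * δ) / (2 * δ) * ((3 + δ) / (5 + δ)) + (3 + δ)⁻¹) * x 1) by ring, heq]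
    exact h
end
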